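/- Let N be a positive integer with n decimal digits. Then ∑_{i=0}^{N} ( ∑_{j=0}^{n−1} ⟨i/10^j⟩ )² = (n²/4 − 49n/108)·N − (1/2)∑_{j=0}^{n−1} j·S_j + (1/2)∑_{j=0}^{n−1} j·10^{−j}·S_j² + O(N), where S_j = ∑_{l=0}^{j−1} a_l 10^l is the number formed by the last j decimal digits of N. -/

import Mathlib

open Finset

lemma sumId (n : ℕ) : ∑ i ∈ range n, (i:ℝ) = n*(n-1)/2 := by
  induction n with
  | zero => simp
  | succ n ih => rw [Finset.sum_range_succ, ih]; push_cast; ring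

lemma sumSq (n : ℕ) : ∑ i ∈ range n, (i:ℝ)^2 = n*(n-1)*(2*n-1)/6 := by
  induction n with
  | zero => simp
  | succ n ih => rw [Finset.sum_range_succ, ih]; push_cast; ring

lemma chunk (g : ℕ → ℝ) (c len : ℕ) :
    ∑ i ∈ range (c+len), g i = ∑ i ∈ range c, g i + ∑ t ∈ range len, g (c+t) := by
  induction len with
  | zero => simp
  | succ l ih => rw [← Nat.add_assoc, Finset.sum_range_succ, ih, Finset.sum_range_succ, add_assoc]

lemma modDivCongr (f : ℕ → ℕ → ℝ) (q : ℕ) (hq : 0 < q) (a t : ℕ) (ht : t < q) :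
    f ((a*q+t)/q) ((a*q+t)%q) = f a t := by
  rw [show a*q + t = q*a + t by ring, Nat.mul_add_div hq, Nat.mul_add_mod,
    Nat.div_eq_of_lt ht, Nat.mod_eq_of_lt ht, Nat.add_zero]

lemma L0 (f : ℕ → ℕ → ℝ) (q : ℕ) (hq : 0 < q) (a : ℕ) :
    ∑ i ∈ range (a*q), f (i/q) (i%q) = ∑ s ∈ range a, ∑ t ∈ range q, f s t := by
  induction a with
  | zero => simp
  | succ a ih =>
    rw [show (a+1)*q = a*q + q by ring, chunk, ih, Finset.sum_range_succ]
    congr 1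
    exact Finset.sum_congr rfl fun t ht => modDivCongr f q hq a t (Finset.mem_range.mp ht)

lemma Lmaster (f : ℕ → ℕ → ℝ) (q : ℕ) (hq : 0 < q) (a r : ℕ) (hr : r ≤ q) :
    ∑ i ∈ range (a*q + r), f (i/q) (i%q)
      = (∑ s ∈ range a, ∑ t ∈ range q, f s t) + ∑ t ∈ range r, f a t := by
  rw [chunk, L0 f q hq a]
  congr 1
  exact Finset.sum_congr rfl fun t ht =>
    modDivCongr f q hq a t (lt_of_lt_of_le (Finset.mem_range.mp ht) hr)

lemma fract_eq (i j : ℕ) : Int.fract ((i:ℝ)/10^j) = ((i % 10^j : ℕ):ℝ)/(10:ℝ)^j := by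
  have hq : (0:ℝ) < 10^j := by positivity
  conv_lhs => rw [show (i:ℝ) = ((10^j*(i/10^j) + i%10^j : ℕ):ℝ) by rw [Nat.div_add_mod]]
  push_cast
  rw [add_div, mul_comm ((10:ℝ)^j), mul_div_assoc, div_self (ne_of_gt hq), mul_one,
    Int.fract_natCast_add]
  refine Int.fract_eq_self.mpr ⟨by positivity, ?_⟩
  rw [div_lt_one hq]
  exact_mod_cast Nat.mod_lt _ (by positivity)
lemma est1 (q m a b : ℝ) (hq : 1 ≤ q) (hm : 1 ≤ m) (ha0 : 0 ≤ a) (ha : a ≤ m - 1)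
    (hb0 : 0 ≤ b) (hb : b ≤ q - 1) :
    |(q*(q*(q-1)/2)*(a*(a-1)/2) + a*(q*(q-1)*(2*q-1)/6) + a*q*(b*(b-1)/2)
        + b*(b-1)*(2*b-1)/6) / ((m*q)*q) - (a*q+b)^2/(4*(m*q))|
      ≤ 3*q + m := by
  have hq0 : (0:ℝ) < q := lt_of_lt_of_le one_pos hq
  have hm0 : (0:ℝ) < m := lt_of_lt_of_le one_pos hm
  have ham : (0:ℝ) ≤ m - a := by linarith
  have hbq : (0:ℝ) ≤ q - b := by linarith
  have hq1 : (0:ℝ) ≤ q - 1 := by linarith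
  have hm1 : (0:ℝ) ≤ m - 1 := by linarith
  -- named nonneg products
  have n1 : (0:ℝ) ≤ (m-a)*q^3 := by positivity
  have n2 : (0:ℝ) ≤ (m-a)*q := by positivity
  have n3 : (0:ℝ) ≤ m*q*(q-1)*(q+1) := by positivity
  have n4 : (0:ℝ) ≤ a*q*(q-b)*(q+b) := by positivity
  have n5 : (0:ℝ) ≤ (q-b)*(q^2+q*b+b^2) := by positivity
  have n6 : (0:ℝ) ≤ (m-1)*q^3 := by positivity
  have n7 : (0:ℝ) ≤ q*(m*q^2 - 1) := by nlinarith
  have n8 : (0:ℝ) ≤ a^2*q^2 := by positivity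
  have n9 : (0:ℝ) ≤ a*q^2 := by positivity
  have n10 : (0:ℝ) ≤ a*q*b := by positivity
  have n11 : (0:ℝ) ≤ a*q^2*b := by positivity
  have n12 : (0:ℝ) ≤ b^2 := by positivity
  have n13 : (0:ℝ) ≤ q*b^2 := by positivity
  have n14 : (0:ℝ) ≤ m*q^3 := by positivity
  have n15 : (0:ℝ) ≤ m^2*q^2 := by positivity
  have n16 : (0:ℝ) ≤ (m-a)*(m+a)*q^2 := by positivity
  have n17 : (0:ℝ) ≤ (m-a)*q^2 := by positivity
  have n18 : (0:ℝ) ≤ m*q^2*(q-1) := by positivity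
  have n19 : (0:ℝ) ≤ (m-a)*q*b := by positivity
  have n20 : (0:ℝ) ≤ m*q*(q-b) := by positivity
  have n21 : (0:ℝ) ≤ (m-a)*q^2*b := by positivity
  have n22 : (0:ℝ) ≤ m*q^2*(q-b) := by positivity
  have n23 : (0:ℝ) ≤ (q-b)*(q+b) := by positivity
  have n24 : (0:ℝ) ≤ q^2*(m*q-1) := by nlinarith
  have n25 : (0:ℝ) ≤ q*(q-b)*(q+b) := by positivity
  have n26 : (0:ℝ) ≤ q^3*(m-1) := by positivity
  have n27 : (0:ℝ) ≤ a*q^3 := by positivity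
  have n28 : (0:ℝ) ≤ a*q := by positivity
  have n29 : (0:ℝ) ≤ a*q*b^2 := by positivity
  have n30 : (0:ℝ) ≤ b^3 := by positivity
  have n31 : (0:ℝ) ≤ b := hb0
  have key : (q*(q*(q-1)/2)*(a*(a-1)/2) + a*(q*(q-1)*(2*q-1)/6) + a*q*(b*(b-1)/2)
        + b*(b-1)*(2*b-1)/6) / ((m*q)*q) - (a*q+b)^2/(4*(m*q))
      = (3*q^2*(q-1)*a*(a-1) + 2*a*q*(q-1)*(2*q-1) + 6*a*q*b*(b-1) + 2*b*(b-1)*(2*b-1)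
          - 3*q*(a*q+b)^2) / (12*(m*q^2)) := by
    field_simp
    ring
  rw [key, abs_div, abs_of_pos (by positivity : (0:ℝ) < 12*(m*q^2)),
    div_le_iff₀ (by positivity : (0:ℝ) < 12*(m*q^2)), abs_le]
  constructor
  · linarith [n16, n17, n18, n19, n20, n21, n22, n23, n24, n25, n26, n27, n28, n29, n30, n31,
      n14, n15, n2, n7]
  · linarith [n1, n2, n3, n4, n5, n6, n7, n8, n9, n10, n11, n12, n13, n14, n15, hbq]

lemma innerSum (q : ℕ) (s : ℕ) :
    ∑ t ∈ range q, (fun s u : ℕ => (u:ℝ)*((s*q+u:ℕ):ℝ)) s t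
      = ((q:ℝ)*((q:ℝ)*((q:ℝ)-1)/2))*(s:ℝ) + (q:ℝ)*((q:ℝ)-1)*(2*(q:ℝ)-1)/6 := by
  have h : ∀ t ∈ range q, (fun s u : ℕ => (u:ℝ)*((s*q+u:ℕ):ℝ)) s t
      = (s:ℝ)*(q:ℝ)*(t:ℝ) + ((t:ℝ))^2 := by
    intro t _; push_cast; ring
  rw [Finset.sum_congr rfl h, Finset.sum_add_distrib, ← Finset.mul_sum, sumId, sumSq]
  ring

lemma Tsum (q : ℕ) (hq : 0 < q) (R : ℕ) :
    ∑ t ∈ range R, ((t % q : ℕ):ℝ) * (t:ℝ)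
      = (q:ℝ)*((q:ℝ)*((q:ℝ)-1)/2)*(((R/q : ℕ):ℝ)*(((R/q : ℕ):ℝ)-1)/2)
        + ((R/q : ℕ):ℝ)*((q:ℝ)*((q:ℝ)-1)*(2*(q:ℝ)-1)/6)
        + ((R/q : ℕ):ℝ)*(q:ℝ)*(((R%q : ℕ):ℝ)*(((R%q : ℕ):ℝ)-1)/2)
        + ((R%q : ℕ):ℝ)*(((R%q : ℕ):ℝ)-1)*(2*((R%q : ℕ):ℝ)-1)/6 := by
  have step : ∀ t ∈ range R, ((t % q : ℕ):ℝ) * (t:ℝ)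
      = (fun s u : ℕ => (u:ℝ)*((s*q+u:ℕ):ℝ)) (t/q) (t%q) := by
    intro t _
    simp only [Nat.div_add_mod']
  rw [Finset.sum_congr rfl step]
  conv_lhs => rw [show R = (R/q)*q + R%q from (Nat.div_add_mod' R q).symm]
  rw [Lmaster (fun s u : ℕ => (u:ℝ)*((s*q+u:ℕ):ℝ)) q hq (R/q) (R%q) (Nat.mod_lt R hq).le]
  rw [Finset.sum_congr rfl (fun s _ => innerSum q s), Finset.sum_add_distrib,
    ← Finset.mul_sum, sumId, Finset.sum_const, Finset.card_range, nsmul_eq_mul]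
  have h2 : ∀ t ∈ range (R%q), (fun s u : ℕ => (u:ℝ)*((s*q+u:ℕ):ℝ)) (R/q) t
      = ((R/q : ℕ):ℝ)*(q:ℝ)*(t:ℝ) + ((t:ℝ))^2 := by
    intro t _; push_cast; ring
  rw [Finset.sum_congr rfl h2, Finset.sum_add_distrib, ← Finset.mul_sum, sumId, sumSq]
  ring

noncomputable def xr : ℝ := (10:ℝ)⁻¹

noncomputable def Ar (j k : ℕ) : ℝ :=
  1/4 - (1/4)*xr^j - (1/4)*xr^k + (1/12)*xr^(Nat.dist j k) + (1/6)*xr^(j+k)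

noncomputable def phiN (N k : ℕ) : ℝ :=
  ((N % 10^k : ℕ):ℝ)^2/(4*(10:ℝ)^k) - ((N % 10^k : ℕ):ℝ)/4

lemma phi_shift (N Q : ℕ) (hQ : 0 < Q) :
    |(((N+1)%Q : ℕ):ℝ)^2/(4*(Q:ℝ)) - (((N+1)%Q : ℕ):ℝ)/4
      - (((N%Q : ℕ):ℝ)^2/(4*(Q:ℝ)) - ((N%Q : ℕ):ℝ)/4)| ≤ 1/2 := by
  have hQR : (0:ℝ) < (Q:ℝ) := by exact_mod_cast hQ
  have hs : N % Q < Q := Nat.mod_lt N hQ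
  by_cases hQ1 : Q = 1
  · subst hQ1; simp
  · have h1Q : 1 % Q = 1 := Nat.mod_eq_of_lt (by omega)
    have h1 : (N+1) % Q = (N%Q + 1) % Q := by rw [Nat.add_mod, h1Q]
    by_cases hcase : N%Q + 1 < Q
    · have h2 : (N%Q+1)%Q = N%Q+1 := Nat.mod_eq_of_lt hcase
      rw [h1, h2]
      have hsR : ((N%Q : ℕ):ℝ) + 1 ≤ (Q:ℝ) := by exact_mod_cast hcase.le
      have hs0 : (0:ℝ) ≤ ((N%Q : ℕ):ℝ) := Nat.cast_nonneg _
      have key : ((N%Q+1 : ℕ):ℝ)^2/(4*(Q:ℝ)) - ((N%Q+1 : ℕ):ℝ)/4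
          - (((N%Q : ℕ):ℝ)^2/(4*(Q:ℝ)) - ((N%Q : ℕ):ℝ)/4)
          = (2*((N%Q : ℕ):ℝ)+1)/(4*(Q:ℝ)) - 1/4 := by
        push_cast
        field_simp
        ring
      rw [key, abs_le]
      constructor
      · have : (0:ℝ) ≤ (2*((N%Q : ℕ):ℝ)+1)/(4*(Q:ℝ)) := by positivity
        linarith
      · have : (2*((N%Q : ℕ):ℝ)+1)/(4*(Q:ℝ)) ≤ 1/2 := by
          rw [div_le_iff₀ (by positivity)]
          linarith
        linarith
    · have hseq : N%Q + 1 = Q := by omega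
      have h2 : (N%Q+1)%Q = 0 := by rw [hseq, Nat.mod_self]
      rw [h1, h2]
      have hQs : (Q:ℝ) = ((N%Q : ℕ):ℝ) + 1 := by exact_mod_cast hseq.symm
      have hs0 : (0:ℝ) ≤ ((N%Q : ℕ):ℝ) := Nat.cast_nonneg _
      have key : ((0:ℕ):ℝ)^2/(4*(Q:ℝ)) - ((0:ℕ):ℝ)/4
          - (((N%Q : ℕ):ℝ)^2/(4*(Q:ℝ)) - ((N%Q : ℕ):ℝ)/4)
          = ((N%Q : ℕ):ℝ)/(4*(Q:ℝ)) := by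
        rw [hQs]
        push_cast
        field_simp
        ring
      rw [key, abs_le]
      constructor
      · have : (0:ℝ) ≤ ((N%Q : ℕ):ℝ)/(4*(Q:ℝ)) := by positivity
        linarith
      · have : ((N%Q : ℕ):ℝ)/(4*(Q:ℝ)) ≤ 1/2 := by
          rw [div_le_iff₀ (by positivity)]
          nlinarith
        linarith
set_option maxHeartbeats 1000000 in
lemma core (N j d : ℕ) :
    |(∑ i ∈ range (N+1), ((i % 10^j : ℕ):ℝ) * ((i % 10^(j+d) : ℕ):ℝ)) / (10:ℝ)^(j+(j+d))
      - (Ar j (j+d) * ((N:ℝ)+1) + phiN N (j+d))|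
      ≤ 4*(10:ℝ)^j + 2*(10:ℝ)^d + 3 := by
  set k := j + d with hk
  set q := 10^j with hqdef
  set Q := 10^k with hQdef
  set m := 10^d with hmdef
  have hq0 : 0 < q := by positivity
  have hQ0 : 0 < Q := by positivity
  have hm0 : 0 < m := by positivity
  have hmq : m * q = Q := by rw [hmdef, hqdef, hQdef, ← pow_add]; congr 1; omega
  have hdvd : q ∣ Q := ⟨m, by rw [← hmq]; ring⟩
  set M := N + 1 with hM
  set B := M / Q with hB
  set R := M % Q with hR
  set S := R / q with hS
  set b := R % q with hb
  -- cast identities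
  have hcq : (q:ℝ) = (10:ℝ)^j := by rw [hqdef]; push_cast; ring
  have hcQ : (Q:ℝ) = (10:ℝ)^k := by rw [hQdef]; push_cast; ring
  have hcm : (m:ℝ) = (10:ℝ)^d := by rw [hmdef]; push_cast; ring
  have hcq1 : (1:ℝ) ≤ (q:ℝ) := by rw [hcq]; exact one_le_pow₀ (by norm_num)
  have hcm1 : (1:ℝ) ≤ (m:ℝ) := by rw [hcm]; exact one_le_pow₀ (by norm_num)
  -- step 1 : periodic decomposition
  have step : ∀ i ∈ range M, ((i % q : ℕ):ℝ) * ((i % Q : ℕ):ℝ)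
      = (fun s t : ℕ => ((t % q : ℕ):ℝ) * (t:ℝ)) (i/Q) (i%Q) := by
    intro i _
    simp only [Nat.mod_mod_of_dvd i hdvd]
  have hsum : ∑ i ∈ range M, ((i % q : ℕ):ℝ) * ((i % Q : ℕ):ℝ)
      = (B:ℝ) * (∑ t ∈ range Q, ((t % q : ℕ):ℝ) * (t:ℝ))
        + ∑ t ∈ range R, ((t % q : ℕ):ℝ) * (t:ℝ) := by
    rw [Finset.sum_congr rfl step]
    conv_lhs => rw [show M = B*Q + R from (Nat.div_add_mod' M Q).symm]
    rw [Lmaster (fun s t : ℕ => ((t % q : ℕ):ℝ) * (t:ℝ)) Q hQ0 B R (Nat.mod_lt M hQ0).le]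
    rw [Finset.sum_const, Finset.card_range, nsmul_eq_mul]
  -- full period sum
  have hQq : Q / q = m := by rw [← hmq, Nat.mul_div_cancel _ hq0]
  have hQmod : Q % q = 0 := by rw [← hmq, Nat.mul_mod_left]
  have hdist : Nat.dist j k = d := by rw [hk, Nat.dist_eq_sub_of_le (Nat.le_add_right j d)]; omega
  have hPA : Ar j k * ((10:ℝ)^k * (10:ℝ)^(j+k))
      = (q:ℝ)*((q:ℝ)*((q:ℝ)-1)/2)*((m:ℝ)*((m:ℝ)-1)/2)
        + (m:ℝ)*((q:ℝ)*((q:ℝ)-1)*(2*(q:ℝ)-1)/6) := by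
    rw [Ar, hdist, hcq, hcm, xr, hk]
    have h1 : (10:ℝ)^(j+d) = (10:ℝ)^j * (10:ℝ)^d := pow_add 10 j d
    have h2 : (10:ℝ)^(j+(j+d)) = (10:ℝ)^j * ((10:ℝ)^j * (10:ℝ)^d) := by
      rw [pow_add, h1]
    have h3 : ((10:ℝ)⁻¹)^j = ((10:ℝ)^j)⁻¹ := inv_pow 10 j
    have h4 : ((10:ℝ)⁻¹)^d = ((10:ℝ)^d)⁻¹ := inv_pow 10 d
    have h5 : ((10:ℝ)⁻¹)^(j+(j+d)) = (((10:ℝ)^j)⁻¹ * (((10:ℝ)^j)⁻¹ * ((10:ℝ)^d)⁻¹)) := by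
      rw [inv_pow, h2]
      rw [mul_inv, mul_inv]
    have h6 : ((10:ℝ)⁻¹)^(j+d) = ((10:ℝ)^j)⁻¹ * ((10:ℝ)^d)⁻¹ := by
      rw [inv_pow, h1, mul_inv]
    rw [h1, h2, h3, h4, h5, h6]
    have hu : (10:ℝ)^j ≠ 0 := by positivity
    have hv : (10:ℝ)^d ≠ 0 := by positivity
    field_simp
    ring
  have hP : ∑ t ∈ range Q, ((t % q : ℕ):ℝ) * (t:ℝ)
      = Ar j k * ((10:ℝ)^k * (10:ℝ)^(j+k)) := by
    rw [Tsum q hq0 Q, hQq, hQmod, hPA]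
    norm_num
  -- B*Q = M - R
  have hBQR : B * Q + R = M := Nat.div_add_mod' M Q
  have hBQ : (B:ℝ) * (10:ℝ)^k = ((N:ℝ)+1) - (R:ℝ) := by
    rw [← hcQ]
    have : ((B * Q + R : ℕ):ℝ) = ((M:ℕ):ℝ) := by rw [hBQR]
    push_cast at this
    push_cast [hM] at this ⊢
    linarith
  -- reduction of the difference
  have hXne : ((10:ℝ)^(j+k)) ≠ 0 := by positivity
  have hDred : (∑ i ∈ range M, ((i % q : ℕ):ℝ) * ((i % Q : ℕ):ℝ)) / (10:ℝ)^(j+k)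
      - (Ar j k * ((N:ℝ)+1) + phiN N k)
      = ((∑ t ∈ range R, ((t % q : ℕ):ℝ) * (t:ℝ)) / (10:ℝ)^(j+k)
          - (R:ℝ)^2/(4*(10:ℝ)^k))
        + ((R:ℝ)/4 - Ar j k * (R:ℝ))
        + (((R:ℝ)^2/(4*(10:ℝ)^k) - (R:ℝ)/4) - phiN N k) := by
    rw [hsum, hP, add_div]
    have e : (B:ℝ) * (Ar j k * ((10:ℝ)^k * (10:ℝ)^(j+k))) / (10:ℝ)^(j+k)
        = Ar j k * (((N:ℝ)+1) - (R:ℝ)) := by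
      rw [show (B:ℝ) * (Ar j k * ((10:ℝ)^k * (10:ℝ)^(j+k)))
          = (Ar j k * ((B:ℝ) * (10:ℝ)^k)) * (10:ℝ)^(j+k) by ring,
        mul_div_cancel_right₀ _ hXne, hBQ]
    rw [e]
    ring
  -- estimate E1 via est1 and Tsum
  have hSm : S < m := by
    rw [hS, Nat.div_lt_iff_lt_mul hq0, hmq]
    exact Nat.mod_lt M hQ0
  have hbq : b < q := Nat.mod_lt R hq0
  have hSm' : (S:ℝ) ≤ (m:ℝ) - 1 := by
    have : (S:ℝ) + 1 ≤ (m:ℝ) := by exact_mod_cast hSm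
    linarith
  have hbq' : (b:ℝ) ≤ (q:ℝ) - 1 := by
    have : (b:ℝ) + 1 ≤ (q:ℝ) := by exact_mod_cast hbq
    linarith
  have hRsplit : (S:ℝ)*(q:ℝ) + (b:ℝ) = (R:ℝ) := by
    have : ((S * q + b : ℕ):ℝ) = (R:ℝ) := by rw [hS, hb, Nat.div_add_mod']
    push_cast at this
    linarith
  have hXQq : (10:ℝ)^(j+k) = (((m:ℝ)*(q:ℝ))*(q:ℝ)) := by
    rw [hcq, hcm, hk, pow_add, pow_add]
    ring
  have hQmqR : 4*((m:ℝ)*(q:ℝ)) = 4*(10:ℝ)^k := by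
    rw [hcq, hcm, hk, pow_add]
    ring
  have hE1 : |(∑ t ∈ range R, ((t % q : ℕ):ℝ) * (t:ℝ)) / (10:ℝ)^(j+k)
      - ((R:ℝ)^2/(4*(10:ℝ)^k))| ≤ 3*(q:ℝ) + (m:ℝ) := by
    have := est1 (q:ℝ) (m:ℝ) (S:ℝ) (b:ℝ) hcq1 hcm1 (Nat.cast_nonneg S) hSm'
      (Nat.cast_nonneg b) hbq'
    rw [hRsplit] at this
    rw [Tsum q hq0 R, ← hS, ← hb, hXQq, ← hQmqR]
    exact this
  -- estimate E2
  have hRQ : (R:ℝ) ≤ (10:ℝ)^k := by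
    rw [← hcQ]
    exact_mod_cast (Nat.mod_lt M hQ0).le
  have hR0 : (0:ℝ) ≤ (R:ℝ) := Nat.cast_nonneg R
  have hxj : xr^j = ((10:ℝ)^j)⁻¹ := by rw [xr, inv_pow]
  have hxk : xr^k = ((10:ℝ)^k)⁻¹ := by rw [xr, inv_pow]
  have hxd : xr^(Nat.dist j k) = ((10:ℝ)^d)⁻¹ := by rw [hdist, xr, inv_pow]
  have hxjk : xr^(j+k) = ((10:ℝ)^(j+k))⁻¹ := by rw [xr, inv_pow]
  have hkjd : (10:ℝ)^k = (10:ℝ)^j * (10:ℝ)^d := by rw [hk, pow_add]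
  have p1 : (R:ℝ) * xr^j ≤ (m:ℝ) := by
    rw [hxj, hcm]
    calc (R:ℝ) * ((10:ℝ)^j)⁻¹ ≤ (10:ℝ)^k * ((10:ℝ)^j)⁻¹ :=
          mul_le_mul_of_nonneg_right hRQ (by positivity)
      _ = (10:ℝ)^d := by rw [hkjd]; field_simp
  have p2 : (R:ℝ) * xr^k ≤ 1 := by
    rw [hxk]
    calc (R:ℝ) * ((10:ℝ)^k)⁻¹ ≤ (10:ℝ)^k * ((10:ℝ)^k)⁻¹ :=
          mul_le_mul_of_nonneg_right hRQ (by positivity)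
      _ = 1 := by field_simp
  have p3 : (R:ℝ) * xr^(Nat.dist j k) ≤ (q:ℝ) := by
    rw [hxd, hcq]
    calc (R:ℝ) * ((10:ℝ)^d)⁻¹ ≤ (10:ℝ)^k * ((10:ℝ)^d)⁻¹ :=
          mul_le_mul_of_nonneg_right hRQ (by positivity)
      _ = (10:ℝ)^j := by rw [hkjd]; field_simp
  have p4 : (R:ℝ) * xr^(j+k) ≤ 1 := by
    rw [hxjk]
    have h1 : (R:ℝ) * ((10:ℝ)^(j+k))⁻¹ ≤ (10:ℝ)^k * ((10:ℝ)^(j+k))⁻¹ :=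
      mul_le_mul_of_nonneg_right hRQ (by positivity)
    have h2 : (10:ℝ)^k * ((10:ℝ)^(j+k))⁻¹ = ((10:ℝ)^j)⁻¹ := by
      rw [pow_add]
      field_simp
      rw [pow_add, hkjd]
      ring
    have h3 : ((10:ℝ)^j)⁻¹ ≤ 1 := by
      rw [inv_le_one_iff₀]
      right
      exact one_le_pow₀ (by norm_num)
    linarith [h1, h2 ▸ h1]
  have q1 : (0:ℝ) ≤ (R:ℝ) * xr^j := by rw [hxj]; positivity
  have q2 : (0:ℝ) ≤ (R:ℝ) * xr^k := by rw [hxk]; positivity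
  have q3 : (0:ℝ) ≤ (R:ℝ) * xr^(Nat.dist j k) := by rw [hxd]; positivity
  have q4 : (0:ℝ) ≤ (R:ℝ) * xr^(j+k) := by rw [hxjk]; positivity
  have hE2 : |(R:ℝ)/4 - Ar j k * (R:ℝ)| ≤ (m:ℝ)/4 + 1/4 + (q:ℝ)/12 + 1/6 := by
    have expand : (R:ℝ)/4 - Ar j k * (R:ℝ)
        = ((R:ℝ)*xr^j)/4 + ((R:ℝ)*xr^k)/4 - ((R:ℝ)*xr^(Nat.dist j k))/12
          - ((R:ℝ)*xr^(j+k))/6 := by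
      rw [Ar]; ring
    rw [expand, abs_le]
    constructor
    · linarith
    · linarith
  have hE3 : |((R:ℝ)^2/(4*(10:ℝ)^k) - (R:ℝ)/4) - phiN N k| ≤ 1/2 := by
    have hps := phi_shift N Q hQ0
    rw [hcQ] at hps
    unfold phiN
    exact hps
  -- assemble
  rw [hDred]
  have tri := (abs_add_le (((∑ t ∈ range R, ((t % q : ℕ):ℝ) * (t:ℝ)) / (10:ℝ)^(j+k)
          - (R:ℝ)^2/(4*(10:ℝ)^k)) + ((R:ℝ)/4 - Ar j k * (R:ℝ)))
        (((R:ℝ)^2/(4*(10:ℝ)^k) - (R:ℝ)/4) - phiN N k)).trans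
      (add_le_add_left (abs_add_le ((∑ t ∈ range R, ((t % q : ℕ):ℝ) * (t:ℝ)) / (10:ℝ)^(j+k)
          - (R:ℝ)^2/(4*(10:ℝ)^k)) ((R:ℝ)/4 - Ar j k * (R:ℝ))) _)
  refine tri.trans ?_
  have goalRHS : 4*(10:ℝ)^j + 2*(10:ℝ)^d + 3 = 4*(q:ℝ) + 2*(m:ℝ) + 3 := by
    rw [hcq, hcm]
  rw [goalRHS]
  linarith [hE1, hE2, hE3]
lemma pairSucc (F : ℕ → ℕ → ℝ) (n : ℕ) :
    ∑ j ∈ range (n+1), ∑ k ∈ range (n+1), F j k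
      = (∑ j ∈ range n, ∑ k ∈ range n, F j k)
        + (∑ j ∈ range n, F j n) + (∑ k ∈ range n, F n k) + F n n := by
  rw [Finset.sum_range_succ]
  have e : ∀ j ∈ range n, ∑ k ∈ range (n+1), F j k
      = (∑ k ∈ range n, F j k) + F j n := fun j _ => Finset.sum_range_succ _ n
  rw [Finset.sum_congr rfl e, Finset.sum_add_distrib, Finset.sum_range_succ]
  ring

lemma maxGroup (G : ℕ → ℝ) (n : ℕ) :
    ∑ j ∈ range n, ∑ k ∈ range n, G (max j k)
      = ∑ k ∈ range n, (2*(k:ℝ)+1) * G k := by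
  induction n with
  | zero => simp
  | succ n ih =>
    rw [pairSucc, ih, Finset.sum_range_succ]
    have e1 : ∀ j ∈ range n, G (max j n) = G n := by
      intro j hj
      rw [max_eq_right (Nat.le_of_lt (Finset.mem_range.mp hj))]
    have e2 : ∀ k ∈ range n, G (max n k) = G n := by
      intro k hk
      rw [max_eq_left (Nat.le_of_lt (Finset.mem_range.mp hk))]
    rw [Finset.sum_congr rfl e1, Finset.sum_congr rfl e2, Finset.sum_const,
      Finset.card_range, nsmul_eq_mul, max_self]
    push_cast
    ring

lemma geo (n : ℕ) : ∑ j ∈ range n, (10:ℝ)^j ≤ (10:ℝ)^n / 9 := by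
  induction n with
  | zero => simp
  | succ n ih =>
    rw [Finset.sum_range_succ, pow_succ]
    nlinarith [pow_pos (show (0:ℝ) < 10 by norm_num) n]

lemma minBound (n : ℕ) :
    ∑ j ∈ range n, ∑ k ∈ range n, (10:ℝ)^(min j k) ≤ 2 * (10:ℝ)^n := by
  induction n with
  | zero => simp
  | succ n ih =>
    rw [pairSucc]
    have e1 : ∀ j ∈ range n, (10:ℝ)^(min j n) = (10:ℝ)^j := by
      intro j hj
      rw [min_eq_left (Nat.le_of_lt (Finset.mem_range.mp hj))]
    have e2 : ∀ k ∈ range n, (10:ℝ)^(min n k) = (10:ℝ)^k := by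
      intro k hk
      rw [min_eq_right (Nat.le_of_lt (Finset.mem_range.mp hk))]
    rw [Finset.sum_congr rfl e1, Finset.sum_congr rfl e2, min_self]
    have hg := geo n
    have hp : (0:ℝ) < (10:ℝ)^n := by positivity
    rw [pow_succ]
    nlinarith

lemma reflect10 (n : ℕ) :
    ∑ j ∈ range n, (10:ℝ)^(n-j) = ∑ j ∈ range n, (10:ℝ)^(j+1) := by
  rw [← Finset.sum_range_reflect (fun j => (10:ℝ)^(j+1)) n]
  apply Finset.sum_congr rfl
  intro j hj
  have : n - 1 - j + 1 = n - j := by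
    have := Finset.mem_range.mp hj
    omega
  rw [this]

lemma distBound (n : ℕ) :
    ∑ j ∈ range n, ∑ k ∈ range n, (10:ℝ)^(Nat.dist j k) ≤ 2 * (10:ℝ)^n := by
  induction n with
  | zero => simp
  | succ n ih =>
    rw [pairSucc]
    have e1 : ∀ j ∈ range n, (10:ℝ)^(Nat.dist j n) = (10:ℝ)^(n-j) := by
      intro j hj
      rw [Nat.dist_eq_sub_of_le (Nat.le_of_lt (Finset.mem_range.mp hj))]
    have e2 : ∀ k ∈ range n, (10:ℝ)^(Nat.dist n k) = (10:ℝ)^(n-k) := by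
      intro k hk
      rw [Nat.dist_comm, Nat.dist_eq_sub_of_le (Nat.le_of_lt (Finset.mem_range.mp hk))]
    rw [Finset.sum_congr rfl e1, Finset.sum_congr rfl e2, Nat.dist_self, reflect10]
    have hsum : ∑ j ∈ range n, (10:ℝ)^(j+1) ≤ (10:ℝ)^(n+1)/9 := by
      have e3 : ∀ j ∈ range n, (10:ℝ)^(j+1) = 10 * (10:ℝ)^j := by
        intro j _
        rw [pow_succ]
        ring
      rw [Finset.sum_congr rfl e3, ← Finset.mul_sum]
      have := geo n
      rw [pow_succ]
      nlinarith
    have hp : (0:ℝ) < (10:ℝ)^n := by positivity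
    have hp1 : (1:ℝ) ≤ (10:ℝ)^n := one_le_pow₀ (by norm_num)
    rw [pow_succ] at *
    nlinarith
lemma xr_pos : (0:ℝ) < xr := by rw [xr]; norm_num
lemma xr_lt_one : xr < 1 := by rw [xr]; norm_num

lemma gcl (n : ℕ) : (1 - xr) * (∑ j ∈ range n, xr^j) = 1 - xr^n := by
  induction n with
  | zero => simp
  | succ n ih =>
    rw [Finset.sum_range_succ, mul_add, ih, pow_succ]
    ring

lemma reflectXr (n : ℕ) :
    ∑ j ∈ range n, xr^(n-j) = xr * ∑ j ∈ range n, xr^j := by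
  rw [Finset.mul_sum, ← Finset.sum_range_reflect (fun j => xr * xr^j) n]
  apply Finset.sum_congr rfl
  intro j hj
  have h1 : n - 1 - j + 1 = n - j := by
    have := Finset.mem_range.mp hj
    omega
  rw [← pow_succ', h1]

lemma Videntity (n : ℕ) :
    ∑ j ∈ range n, ∑ k ∈ range n, xr^(Nat.dist j k)
      = (n:ℝ)*(2*(∑ j ∈ range n, xr^j) - 1) - 2*(∑ j ∈ range n, (j:ℝ)*xr^j) := by
  induction n with
  | zero => simp
  | succ n ih =>
    rw [pairSucc, ih]
    have e1 : ∀ j ∈ range n, xr^(Nat.dist j n) = xr^(n-j) := by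
      intro j hj
      rw [Nat.dist_eq_sub_of_le (Nat.le_of_lt (Finset.mem_range.mp hj))]
    have e2 : ∀ k ∈ range n, xr^(Nat.dist n k) = xr^(n-k) := by
      intro k hk
      rw [Nat.dist_comm, Nat.dist_eq_sub_of_le (Nat.le_of_lt (Finset.mem_range.mp hk))]
    rw [Finset.sum_congr rfl e1, Finset.sum_congr rfl e2, Nat.dist_self, reflectXr,
      Finset.sum_range_succ, Finset.sum_range_succ (fun j => (j:ℝ)*xr^j)]
    have hg := gcl n
    push_cast
    nlinarith [hg]
lemma Ainner (n j : ℕ) :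
    ∑ k ∈ range n, Ar j k
      = (n:ℝ)*(1/4) - (1/4)*((n:ℝ)*xr^j) - (1/4)*(∑ k ∈ range n, xr^k)
        + (1/12)*(∑ k ∈ range n, xr^(Nat.dist j k))
        + (1/6)*(xr^j * (∑ k ∈ range n, xr^k)) := by
  have e : ∀ k ∈ range n, Ar j k
      = 1/4 - (1/4)*xr^j - (1/4)*xr^k + (1/12)*xr^(Nat.dist j k) + (1/6)*(xr^j*xr^k) := by
    intro k _
    rw [Ar, pow_add]
  rw [Finset.sum_congr rfl e, Finset.sum_add_distrib, Finset.sum_add_distrib,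
    Finset.sum_sub_distrib, Finset.sum_sub_distrib]
  simp only [Finset.sum_const, Finset.card_range, nsmul_eq_mul, ← Finset.mul_sum]
  ring

lemma AsumEq (n : ℕ) :
    ∑ j ∈ range n, ∑ k ∈ range n, Ar j k
      = (n:ℝ)^2/4 - ((n:ℝ)/2)*(∑ j ∈ range n, xr^j)
        + (1/12)*(∑ j ∈ range n, ∑ k ∈ range n, xr^(Nat.dist j k))
        + (1/6)*(∑ j ∈ range n, xr^j)^2 := by
  rw [Finset.sum_congr rfl (fun j _ => Ainner n j)]
  rw [Finset.sum_add_distrib, Finset.sum_add_distrib, Finset.sum_sub_distrib,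
    Finset.sum_sub_distrib]
  simp only [Finset.sum_const, Finset.card_range, nsmul_eq_mul, ← Finset.mul_sum]
  rw [← Finset.sum_mul, sq]
  ring
lemma sum5 (n : ℕ) : ∑ j ∈ range n, ((5:ℝ)⁻¹)^j = (5/4)*(1 - ((5:ℝ)⁻¹)^n) := by
  induction n with
  | zero => simp
  | succ n ih =>
    rw [Finset.sum_range_succ, ih, pow_succ]
    ring

lemma Abound (n : ℕ) :
    |(∑ j ∈ range n, ∑ k ∈ range n, Ar j k) - ((n:ℝ)^2/4 - 49*(n:ℝ)/108)| ≤ 1 := by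
  rw [AsumEq, Videntity]
  set G := ∑ j ∈ range n, xr^j with hGdef
  set H := ∑ j ∈ range n, (j:ℝ)*xr^j with hHdef
  have hgeq : G = (10/9)*(1 - xr^n) := by
    have h1 := gcl n
    rw [← hGdef] at h1
    have h2 : (1 - xr) = 9/10 := by rw [xr]; norm_num
    rw [h2] at h1
    linarith
  have hxn0 : (0:ℝ) ≤ xr^n := pow_nonneg xr_pos.le n
  have hxn1 : xr^n ≤ 1 := pow_le_one₀ xr_pos.le xr_lt_one.le
  have hG0 : (0:ℝ) ≤ G := by
    rw [hGdef]
    exact Finset.sum_nonneg fun j _ => pow_nonneg xr_pos.le j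
  have hG1 : G ≤ 10/9 := by rw [hgeq]; linarith
  have hG2 : G^2 ≤ (10/9)^2 := by nlinarith
  have hnx0 : (0:ℝ) ≤ (n:ℝ)*xr^n := mul_nonneg (Nat.cast_nonneg n) hxn0
  have hnx1 : (n:ℝ)*xr^n ≤ 1 := by
    have h1 : (n:ℝ) ≤ (10:ℝ)^n := by
      have := Nat.lt_pow_self (n := n) (show 1 < 10 by norm_num)
      exact_mod_cast this.le
    have h2 : xr^n = ((10:ℝ)^n)⁻¹ := by rw [xr, inv_pow]
    rw [h2]
    calc (n:ℝ) * ((10:ℝ)^n)⁻¹ ≤ (10:ℝ)^n * ((10:ℝ)^n)⁻¹ :=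
          mul_le_mul_of_nonneg_right h1 (by positivity)
      _ = 1 := by field_simp
  have hH0 : (0:ℝ) ≤ H := by
    rw [hHdef]
    exact Finset.sum_nonneg fun j _ => mul_nonneg (Nat.cast_nonneg j) (pow_nonneg xr_pos.le j)
  have hH1 : H ≤ 5/4 := by
    rw [hHdef]
    calc ∑ j ∈ range n, (j:ℝ)*xr^j ≤ ∑ j ∈ range n, ((5:ℝ)⁻¹)^j := by
          apply Finset.sum_le_sum
          intro j _
          have h2j : (j:ℝ) ≤ (2:ℝ)^j := by
            have := Nat.lt_two_pow_self (n := j)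
            exact_mod_cast this.le
          calc (j:ℝ)*xr^j ≤ (2:ℝ)^j * xr^j :=
              mul_le_mul_of_nonneg_right h2j (pow_nonneg xr_pos.le j)
            _ = ((5:ℝ)⁻¹)^j := by
              rw [← mul_pow, xr]
              norm_num
      _ = (5/4)*(1 - ((5:ℝ)⁻¹)^n) := sum5 n
      _ ≤ 5/4 := by
          have : (0:ℝ) ≤ ((5:ℝ)⁻¹)^n := by positivity
          linarith
  have key : (n:ℝ)^2/4 - ((n:ℝ)/2)*G + (1/12)*((n:ℝ)*(2*G - 1) - 2*H) + (1/6)*G^2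
      - ((n:ℝ)^2/4 - 49*(n:ℝ)/108)
      = (10/27)*((n:ℝ)*xr^n) - H/6 + G^2/6 := by
    linear_combination (-(n:ℝ)/3) * hgeq
  rw [key, abs_le]
  constructor <;> nlinarith
noncomputable def Wf (N j k : ℕ) : ℝ :=
  (∑ i ∈ Finset.range (N+1), ((i % 10^j : ℕ):ℝ) * ((i % 10^k : ℕ):ℝ)) / (10:ℝ)^(j+k)

noncomputable def Tg (N j k : ℕ) : ℝ := Ar j k * ((N:ℝ)+1) + phiN N (max j k)

lemma Ar_symm (j k : ℕ) : Ar j k = Ar k j := by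
  rw [Ar, Ar, Nat.dist_comm, Nat.add_comm]
  ring

lemma Wf_symm (N j k : ℕ) : Wf N j k = Wf N k j := by
  rw [Wf, Wf, Nat.add_comm k j]
  congr 1
  exact Finset.sum_congr rfl fun i _ => mul_comm _ _

lemma Tg_symm (N j k : ℕ) : Tg N j k = Tg N k j := by
  rw [Tg, Tg, Ar_symm, max_comm]

lemma pairBound (N j k : ℕ) :
    |Wf N j k - Tg N j k| ≤ 4*(10:ℝ)^(min j k) + 2*(10:ℝ)^(Nat.dist j k) + 3 := by
  rcases le_total j k with h | h
  · obtain ⟨d, rfl⟩ : ∃ d, k = j + d := ⟨k - j, by omega⟩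
    have hcore := core N j d
    rw [min_eq_left h, Nat.dist_eq_sub_of_le h, show j + d - j = d by omega,
      Wf, Tg, max_eq_right h]
    exact hcore
  · obtain ⟨d, rfl⟩ : ∃ d, j = k + d := ⟨j - k, by omega⟩
    have hcore := core N k d
    rw [min_eq_right h, Nat.dist_comm, Nat.dist_eq_sub_of_le h, show k + d - k = d by omega,
      Wf_symm, Tg_symm, Wf, Tg, max_eq_right h]
    exact hcore

lemma Ar_abs (j k : ℕ) : |Ar j k| ≤ 1 := by
  have b1 : (0:ℝ) ≤ xr^j := pow_nonneg xr_pos.le j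
  have b2 : (0:ℝ) ≤ xr^k := pow_nonneg xr_pos.le k
  have b3 : (0:ℝ) ≤ xr^(Nat.dist j k) := pow_nonneg xr_pos.le _
  have b4 : (0:ℝ) ≤ xr^(j+k) := pow_nonneg xr_pos.le _
  have c1 : xr^j ≤ 1 := pow_le_one₀ xr_pos.le xr_lt_one.le
  have c2 : xr^k ≤ 1 := pow_le_one₀ xr_pos.le xr_lt_one.le
  have c3 : xr^(Nat.dist j k) ≤ 1 := pow_le_one₀ xr_pos.le xr_lt_one.le
  have c4 : xr^(j+k) ≤ 1 := pow_le_one₀ xr_pos.le xr_lt_one.le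
  rw [Ar, abs_le]
  constructor <;> linarith

lemma phi_abs (N k : ℕ) : |phiN N k| ≤ (10:ℝ)^k/4 := by
  have hP : (0:ℝ) < (10:ℝ)^k := by positivity
  have hs0 : (0:ℝ) ≤ ((N % 10^k : ℕ):ℝ) := Nat.cast_nonneg _
  have hsP : ((N % 10^k : ℕ):ℝ) ≤ (10:ℝ)^k := by
    have h1 : N % 10^k < 10^k := Nat.mod_lt N (by positivity)
    have h2 : ((N % 10^k : ℕ):ℝ) < ((10^k : ℕ):ℝ) := by exact_mod_cast h1
    have h3 : ((10^k : ℕ):ℝ) = (10:ℝ)^k := by push_cast; ring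
    linarith [h3 ▸ h2]
  have hsq : ((N % 10^k : ℕ):ℝ)^2/(4*(10:ℝ)^k) ≤ (10:ℝ)^k/4 := by
    rw [div_le_div_iff₀ (by positivity) (by norm_num)]
    nlinarith
  have hsq0 : (0:ℝ) ≤ ((N % 10^k : ℕ):ℝ)^2/(4*(10:ℝ)^k) := by positivity
  rw [phiN, abs_le]
  constructor <;> linarith

/-- `S_j`, the number formed by the last `j` decimal digits of `N`, equals `N % 10^j`. -/
theorem stmt4 :
    ∃ C > (0:ℝ), ∀ N : ℕ, 0 < N →
      |(∑ i ∈ Finset.range (N + 1),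
          (∑ j ∈ Finset.range (Nat.digits 10 N).length, Int.fract ((i:ℝ) / 10 ^ j))^2) -
        ((((Nat.digits 10 N).length : ℝ)^2 / 4 - 49 * ((Nat.digits 10 N).length : ℝ) / 108) * (N:ℝ)
          - (1 / 2) * ∑ j ∈ Finset.range (Nat.digits 10 N).length,
              (j:ℝ) * ((N % 10 ^ j : ℕ) : ℝ)
          + (1 / 2) * ∑ j ∈ Finset.range (Nat.digits 10 N).length,
              (j:ℝ) * ((N % 10 ^ j : ℕ) : ℝ)^2 / 10 ^ j)| ≤ C * (N:ℝ) := by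
  refine ⟨200, by norm_num, ?_⟩
  intro N hN
  set n := (Nat.digits 10 N).length with hn
  have hN1 : (1:ℝ) ≤ (N:ℝ) := by exact_mod_cast hN
  have h2 : (10:ℕ)^n ≤ 10 * N := Nat.base_pow_length_digits_le 10 N (by norm_num) hN.ne'
  have hup : (10:ℝ)^n ≤ 10*(N:ℝ) := by
    have h3 : ((10^n : ℕ):ℝ) ≤ ((10*N : ℕ):ℝ) := by exact_mod_cast h2
    push_cast at h3
    linarith
  have hlow : 10^(n-1) ≤ N := by
    have h1 : (10:ℕ)^n = 10 * 10^(n-1) := by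
      rw [← pow_succ']
      congr 1
      have : Nat.digits 10 N ≠ [] := Nat.digits_ne_nil_iff_ne_zero.mpr hN.ne'
      have := List.length_pos_iff.mpr this
      omega
    rw [h1] at h2
    exact Nat.le_of_mul_le_mul_left h2 (by norm_num)
  have hnsq : (n:ℝ)^2 ≤ 4*(N:ℝ) := by
    have a1 : n^2 < 4^n := by
      have h2' : n < 2^n := Nat.lt_two_pow_self (n := n)
      calc n^2 < (2^n)^2 := Nat.pow_lt_pow_left h2' (by norm_num)
        _ = 4^n := by
            rw [← pow_mul, show (4:ℕ) = 2^2 by norm_num, ← pow_mul, Nat.mul_comm]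
    have a2 : (4:ℕ)^n = 4 * 4^(n-1) := by
      rw [← pow_succ']
      congr 1
      have : Nat.digits 10 N ≠ [] := Nat.digits_ne_nil_iff_ne_zero.mpr hN.ne'
      have := List.length_pos_iff.mpr this
      omega
    have a3 : (4:ℕ)^(n-1) ≤ 10^(n-1) := Nat.pow_le_pow_left (by norm_num) _
    have a4 : n^2 ≤ 4*N := by
      calc n^2 ≤ 4^n := a1.le
        _ = 4*4^(n-1) := a2
        _ ≤ 4*10^(n-1) := Nat.mul_le_mul_left 4 a3
        _ ≤ 4*N := Nat.mul_le_mul_left 4 hlow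
    have := (Nat.cast_le (α := ℝ)).mpr a4
    push_cast at this
    linarith
  -- rewrite LHS into double sum of Wf
  have hLHS : (∑ i ∈ Finset.range (N + 1),
      (∑ j ∈ Finset.range n, Int.fract ((i:ℝ) / 10 ^ j))^2)
      = ∑ j ∈ range n, ∑ k ∈ range n, Wf N j k := by
    have e1 : ∀ i ∈ range (N+1), (∑ j ∈ range n, Int.fract ((i:ℝ)/10^j))^2
        = ∑ j ∈ range n, ∑ k ∈ range n,
            (((i % 10^j : ℕ):ℝ)/(10:ℝ)^j) * (((i % 10^k : ℕ):ℝ)/(10:ℝ)^k) := by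
      intro i _
      rw [Finset.sum_congr rfl (fun j _ => fract_eq i j), sq, Finset.sum_mul_sum]
    rw [Finset.sum_congr rfl e1, Finset.sum_comm]
    apply Finset.sum_congr rfl
    intro j _
    rw [Finset.sum_comm]
    apply Finset.sum_congr rfl
    intro k _
    have e2 : ∀ i ∈ range (N+1),
        (((i % 10^j : ℕ):ℝ)/(10:ℝ)^j) * (((i % 10^k : ℕ):ℝ)/(10:ℝ)^k)
        = (((i % 10^j : ℕ):ℝ) * ((i % 10^k : ℕ):ℝ))/(10:ℝ)^(j+k) := by
      intro i _
      rw [div_mul_div_comm, ← pow_add]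
    rw [Finset.sum_congr rfl e2, ← Finset.sum_div]
    rfl
  -- Tg sum
  have hTg : ∑ j ∈ range n, ∑ k ∈ range n, Tg N j k
      = (∑ j ∈ range n, ∑ k ∈ range n, Ar j k) * ((N:ℝ)+1)
        + ∑ k ∈ range n, (2*(k:ℝ)+1) * phiN N k := by
    simp only [Tg]
    rw [← maxGroup (phiN N) n]
    rw [Finset.sum_congr rfl (fun j (_ : j ∈ range n) => Finset.sum_add_distrib),
      Finset.sum_add_distrib]
    congr 1
    simp only [← Finset.sum_mul]
  -- EA bound
  have hEA : |(∑ j ∈ range n, ∑ k ∈ range n, Wf N j k)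
      - ∑ j ∈ range n, ∑ k ∈ range n, Tg N j k|
      ≤ 12*(10:ℝ)^n + 3*(n:ℝ)^2 := by
    have t1 : (∑ j ∈ range n, ∑ k ∈ range n, Wf N j k)
        - ∑ j ∈ range n, ∑ k ∈ range n, Tg N j k
        = ∑ j ∈ range n, ∑ k ∈ range n, (Wf N j k - Tg N j k) := by
      rw [← Finset.sum_sub_distrib]
      exact Finset.sum_congr rfl fun j _ => (Finset.sum_sub_distrib _ _).symm
    rw [t1]
    calc |∑ j ∈ range n, ∑ k ∈ range n, (Wf N j k - Tg N j k)|
        ≤ ∑ j ∈ range n, |∑ k ∈ range n, (Wf N j k - Tg N j k)| :=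
          Finset.abs_sum_le_sum_abs _ _
      _ ≤ ∑ j ∈ range n, ∑ k ∈ range n, |Wf N j k - Tg N j k| :=
          Finset.sum_le_sum (fun j _ => Finset.abs_sum_le_sum_abs _ _)
      _ ≤ ∑ j ∈ range n, ∑ k ∈ range n,
            (4*(10:ℝ)^(min j k) + 2*(10:ℝ)^(Nat.dist j k) + 3) :=
          Finset.sum_le_sum (fun j _ => Finset.sum_le_sum (fun k _ => pairBound N j k))
      _ = 4*(∑ j ∈ range n, ∑ k ∈ range n, (10:ℝ)^(min j k))
            + 2*(∑ j ∈ range n, ∑ k ∈ range n, (10:ℝ)^(Nat.dist j k)) + 3*(n:ℝ)^2 := by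
          simp only [Finset.sum_add_distrib, ← Finset.mul_sum, Finset.sum_const,
            Finset.card_range, nsmul_eq_mul]
          ring
      _ ≤ 12*(10:ℝ)^n + 3*(n:ℝ)^2 := by
          have := minBound n
          have := distBound n
          linarith
  -- EB bound
  have hArsum : |∑ j ∈ range n, ∑ k ∈ range n, Ar j k| ≤ (n:ℝ)^2 := by
    calc |∑ j ∈ range n, ∑ k ∈ range n, Ar j k|
        ≤ ∑ j ∈ range n, |∑ k ∈ range n, Ar j k| := Finset.abs_sum_le_sum_abs _ _
      _ ≤ ∑ j ∈ range n, ∑ k ∈ range n, |Ar j k| :=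
          Finset.sum_le_sum (fun j _ => Finset.abs_sum_le_sum_abs _ _)
      _ ≤ ∑ j ∈ range n, ∑ k ∈ range n, (1:ℝ) :=
          Finset.sum_le_sum (fun j _ => Finset.sum_le_sum (fun k _ => Ar_abs j k))
      _ = (n:ℝ)^2 := by
          simp only [Finset.sum_const, Finset.card_range, nsmul_eq_mul, mul_one]
          rw [sq]
  have hEB : |(∑ j ∈ range n, ∑ k ∈ range n, Ar j k) * ((N:ℝ)+1)
      - ((n:ℝ)^2 / 4 - 49 * (n:ℝ) / 108) * (N:ℝ)| ≤ (N:ℝ) + (n:ℝ)^2 := by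
    have e : (∑ j ∈ range n, ∑ k ∈ range n, Ar j k) * ((N:ℝ)+1)
        - ((n:ℝ)^2 / 4 - 49 * (n:ℝ) / 108) * (N:ℝ)
        = (N:ℝ)*((∑ j ∈ range n, ∑ k ∈ range n, Ar j k)
            - ((n:ℝ)^2/4 - 49*(n:ℝ)/108))
          + (∑ j ∈ range n, ∑ k ∈ range n, Ar j k) := by ring
    rw [e]
    calc |(N:ℝ)*((∑ j ∈ range n, ∑ k ∈ range n, Ar j k)
            - ((n:ℝ)^2/4 - 49*(n:ℝ)/108))
          + (∑ j ∈ range n, ∑ k ∈ range n, Ar j k)|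
        ≤ |(N:ℝ)*((∑ j ∈ range n, ∑ k ∈ range n, Ar j k)
            - ((n:ℝ)^2/4 - 49*(n:ℝ)/108))|
          + |∑ j ∈ range n, ∑ k ∈ range n, Ar j k| := abs_add_le _ _
      _ ≤ (N:ℝ)*1 + (n:ℝ)^2 := by
          have h1 : |(N:ℝ)*((∑ j ∈ range n, ∑ k ∈ range n, Ar j k)
              - ((n:ℝ)^2/4 - 49*(n:ℝ)/108))| ≤ (N:ℝ)*1 := by
            rw [abs_mul, abs_of_nonneg (Nat.cast_nonneg N)]
            exact mul_le_mul_of_nonneg_left (Abound n) (Nat.cast_nonneg N)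
          linarith [hArsum]
      _ = (N:ℝ) + (n:ℝ)^2 := by ring
  -- EC bound
  have hEC : |∑ k ∈ range n, phiN N k| ≤ (10:ℝ)^n/36 := by
    calc |∑ k ∈ range n, phiN N k| ≤ ∑ k ∈ range n, |phiN N k| :=
          Finset.abs_sum_le_sum_abs _ _
      _ ≤ ∑ k ∈ range n, (10:ℝ)^k/4 := Finset.sum_le_sum (fun k _ => phi_abs N k)
      _ = (∑ k ∈ range n, (10:ℝ)^k)/4 := by rw [← Finset.sum_div]
      _ ≤ ((10:ℝ)^n/9)/4 := by
          have := geo n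
          linarith
      _ = (10:ℝ)^n/36 := by ring
  -- Main rearrangement
  have hMainEq : (((n:ℝ))^2 / 4 - 49 * (n:ℝ) / 108) * (N:ℝ)
          - (1 / 2) * (∑ j ∈ Finset.range n, (j:ℝ) * ((N % 10 ^ j : ℕ) : ℝ))
          + (1 / 2) * (∑ j ∈ Finset.range n, (j:ℝ) * ((N % 10 ^ j : ℕ) : ℝ)^2 / 10 ^ j)
      = ((n:ℝ)^2 / 4 - 49 * (n:ℝ) / 108) * (N:ℝ)
          + ∑ k ∈ range n, 2*(k:ℝ)*phiN N k := by
    have e : ∀ k ∈ range n, 2*(k:ℝ)*phiN N k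
        = (1/2)*((k:ℝ) * ((N % 10 ^ k : ℕ) : ℝ)^2 / 10 ^ k)
          - (1/2)*((k:ℝ) * ((N % 10 ^ k : ℕ) : ℝ)) := by
      intro k _
      rw [phiN]
      have hP : ((10:ℝ)^k) ≠ 0 := by positivity
      field_simp
      ring
    rw [Finset.sum_congr rfl e, Finset.sum_sub_distrib, ← Finset.mul_sum, ← Finset.mul_sum]
    ring
  -- put everything together
  rw [hLHS, hMainEq]
  have split : (∑ j ∈ range n, ∑ k ∈ range n, Wf N j k)
      - (((n:ℝ)^2 / 4 - 49 * (n:ℝ) / 108) * (N:ℝ) + ∑ k ∈ range n, 2*(k:ℝ)*phiN N k)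
      = ((∑ j ∈ range n, ∑ k ∈ range n, Wf N j k)
          - ∑ j ∈ range n, ∑ k ∈ range n, Tg N j k)
        + ((∑ j ∈ range n, ∑ k ∈ range n, Ar j k) * ((N:ℝ)+1)
          - ((n:ℝ)^2 / 4 - 49 * (n:ℝ) / 108) * (N:ℝ))
        + ∑ k ∈ range n, phiN N k := by
    rw [hTg]
    have e3 : ∑ k ∈ range n, (2*(k:ℝ)+1) * phiN N k
        = (∑ k ∈ range n, 2*(k:ℝ)*phiN N k) + ∑ k ∈ range n, phiN N k := by
      rw [← Finset.sum_add_distrib]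
      exact Finset.sum_congr rfl fun k _ => by ring
    rw [e3]
    ring
  rw [split]
  have tri := (abs_add_le (((∑ j ∈ range n, ∑ k ∈ range n, Wf N j k)
          - ∑ j ∈ range n, ∑ k ∈ range n, Tg N j k)
        + ((∑ j ∈ range n, ∑ k ∈ range n, Ar j k) * ((N:ℝ)+1)
          - ((n:ℝ)^2 / 4 - 49 * (n:ℝ) / 108) * (N:ℝ)))
      (∑ k ∈ range n, phiN N k)).trans
    (add_le_add_left (abs_add_le ((∑ j ∈ range n, ∑ k ∈ range n, Wf N j k)
          - ∑ j ∈ range n, ∑ k ∈ range n, Tg N j k)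
        ((∑ j ∈ range n, ∑ k ∈ range n, Ar j k) * ((N:ℝ)+1)
          - ((n:ℝ)^2 / 4 - 49 * (n:ℝ) / 108) * (N:ℝ))) _)
  refine tri.trans ?_
  linarith [hEA, hEB, hEC, hup, hnsq, hN1]
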